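/- arXiv:0805.3070 — 2 statements merged into one kernel-verified Lean document; each statement's English description precedes it below -/
import Mathlib

section
/- Let P₁ and P₂ be independent random variables on a probability space, each uniformly distributed on the interval (0,1), and let w₁, w₂ be positive real constants with w₁² + w₂² = 1. Then the combined p-value P = Φ̄(w₁·z(P₁) + w₂·z(P₂)) is uniformly distributed on (0,1). -/
open MeasureTheory ProbabilityTheory Set

/-- The cumulative distribution function `Φ` of the standard Gaussian measure on `ℝ`. -/
noncomputable def stdGaussCDF (x : ℝ) : ℝ := ((gaussianReal 0 1) (Set.Iic x)).toReal

/-- The survival function `Φ̄ = 1 - Φ` of the standard Gaussian measure. -/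
noncomputable def stdGaussSurv (x : ℝ) : ℝ := 1 - stdGaussCDF x

/-- `z(u) = Φ̄⁻¹(u)`, the inverse of the standard Gaussian survival function. -/
noncomputable def zval : ℝ → ℝ := Function.invFun stdGaussSurv

/-- The uniform distribution on `(0,1)`: Lebesgue measure restricted to `(0,1)`. -/
noncomputable def unif01 : Measure ℝ := volume.restrict (Set.Ioo (0 : ℝ) 1)

open Filter
open scoped Topology ENNReal


namespace StdGaussAux

local notation "γ" => gaussianReal 0 1

lemma ofReal_cdf (x : ℝ) : ENNReal.ofReal (stdGaussCDF x) = γ (Iic x) :=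
  ENNReal.ofReal_toReal (measure_ne_top _ _)

lemma gauss_pos {s : Set ℝ} (hs : MeasurableSet s) (h : 0 < volume s) : 0 < γ s := by
  rw [gaussianReal_apply 0 one_ne_zero s]
  rcases eq_or_lt_of_le (zero_le : 0 ≤ ∫⁻ x in s, gaussianPDF 0 1 x) with h0 | h0
  · exfalso
    have hmeas : Measurable (gaussianPDF 0 1) :=
      (measurable_gaussianPDFReal 0 1).ennreal_ofReal
    have := (lintegral_eq_zero_iff hmeas).mp h0.symm
    have h1 : ∀ᵐ x ∂(volume.restrict s), False := by
      filter_upwards [this] with x hx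
      have hp : 0 < gaussianPDF 0 1 x :=
        ENNReal.ofReal_pos.mpr (gaussianPDFReal_pos 0 1 x one_ne_zero)
      simp only [Pi.zero_apply] at hx
      exact absurd hx hp.ne'
    exact absurd (by simpa [Measure.restrict_apply_univ] using ae_iff.mp h1) h.ne'
  · exact h0

lemma cdf_lt_one (x : ℝ) : stdGaussCDF x < 1 := by
  have h2 : 0 < γ (Ioi x) :=
    gauss_pos measurableSet_Ioi (by simp)
  have h3 : γ (Iic x) + γ (Ioi x) = 1 := by
    rw [← measure_union (Iic_disjoint_Ioi le_rfl) measurableSet_Ioi, Iic_union_Ioi,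
      measure_univ]
  have h4 : γ (Iic x) < 1 := by
    calc γ (Iic x) < γ (Iic x) + γ (Ioi x) :=
          ENNReal.lt_add_right (measure_ne_top _ _) h2.ne'
    _ = 1 := h3
  have := ENNReal.toReal_lt_toReal (measure_ne_top γ _) (by simp : (1:ℝ≥0∞) ≠ ⊤) |>.mpr h4
  simpa [stdGaussCDF] using this

lemma cdf_pos (x : ℝ) : 0 < stdGaussCDF x := by
  have h1 : 0 < γ (Iic x) :=
    lt_of_lt_of_le (gauss_pos measurableSet_Ioc (by simp : 0 < volume (Ioc (x-1) x)))
      (measure_mono Ioc_subset_Iic_self)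
  exact ENNReal.toReal_pos h1.ne' (measure_ne_top _ _)

lemma cdf_strictMono : StrictMono stdGaussCDF := by
  intro a b hab
  have h1 : γ (Iic a) + γ (Ioc a b) = γ (Iic b) := by
    rw [← measure_union (Iic_disjoint_Ioc le_rfl) measurableSet_Ioc, Iic_union_Ioc_eq_Iic hab.le]
  have h2 : 0 < γ (Ioc a b) := gauss_pos measurableSet_Ioc (by simp [hab])
  have h4 : γ (Iic a) < γ (Iic b) := by
    calc γ (Iic a) < γ (Iic a) + γ (Ioc a b) :=
          ENNReal.lt_add_right (measure_ne_top _ _) h2.ne'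
    _ = γ (Iic b) := h1
  exact ENNReal.toReal_lt_toReal (measure_ne_top γ _) (measure_ne_top γ _) |>.mpr h4

end StdGaussAux

namespace StdGaussAux

local notation "γ" => gaussianReal 0 1

lemma cdf_sub_le {a b : ℝ} (hab : a ≤ b) :
    stdGaussCDF b - stdGaussCDF a ≤ (Real.sqrt (2 * Real.pi))⁻¹ * (b - a) := by
  set M : ℝ := (Real.sqrt (2 * Real.pi))⁻¹ with hM
  have hMnn : 0 ≤ M := inv_nonneg.mpr (Real.sqrt_nonneg _)
  have h1 : γ (Iic a) + γ (Ioc a b) = γ (Iic b) := by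
    rw [← measure_union (Iic_disjoint_Ioc le_rfl) measurableSet_Ioc, Iic_union_Ioc_eq_Iic hab]
  have h2 : stdGaussCDF b = stdGaussCDF a + (γ (Ioc a b)).toReal := by
    rw [stdGaussCDF, stdGaussCDF, ← h1, ENNReal.toReal_add (measure_ne_top _ _) (measure_ne_top _ _)]
  have h3 : γ (Ioc a b) = ENNReal.ofReal (∫ x in Ioc a b, gaussianPDFReal 0 1 x) :=
    gaussianReal_apply_eq_integral 0 one_ne_zero _
  have h4 : (γ (Ioc a b)).toReal = ∫ x in Ioc a b, gaussianPDFReal 0 1 x := by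
    rw [h3, ENNReal.toReal_ofReal (integral_nonneg fun x => gaussianPDFReal_nonneg 0 1 x)]
  have hbound : ∀ x : ℝ, gaussianPDFReal 0 1 x ≤ M := by
    intro x
    rw [gaussianPDFReal]
    push_cast
    rw [mul_one]
    have : Real.exp (-(x - 0) ^ 2 / (2 * 1)) ≤ 1 := by
      rw [Real.exp_le_one_iff]
      have := sq_nonneg (x - 0)
      linarith
    calc (Real.sqrt (2 * Real.pi))⁻¹ * Real.exp (-(x - 0) ^ 2 / (2 * 1))
        ≤ (Real.sqrt (2 * Real.pi))⁻¹ * 1 := by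
          exact mul_le_mul_of_nonneg_left this (inv_nonneg.mpr (Real.sqrt_nonneg _))
      _ = M := by rw [mul_one]
  have h5 : ∫ x in Ioc a b, gaussianPDFReal 0 1 x ≤ ∫ _x in Ioc a b, M := by
    refine setIntegral_mono ((integrable_gaussianPDFReal 0 1).integrableOn)
      (integrableOn_const measure_Ioc_lt_top.ne) hbound
  have h6 : ∫ _x in Ioc a b, M = M * (b - a) := by
    rw [setIntegral_const, measureReal_def, Real.volume_Ioc, ENNReal.toReal_ofReal (by linarith), smul_eq_mul,
      mul_comm]
  rw [h2]
  linarith [h4, h5, h6]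

lemma cdf_continuous : Continuous stdGaussCDF := by
  set M : ℝ := (Real.sqrt (2 * Real.pi))⁻¹ with hM
  have hMnn : 0 ≤ M := inv_nonneg.mpr (Real.sqrt_nonneg _)
  refine (LipschitzWith.of_dist_le_mul (K := M.toNNReal) ?_).continuous
  intro x y
  rw [Real.coe_toNNReal _ hMnn, Real.dist_eq, Real.dist_eq]
  rcases le_total x y with h | h
  · have h1 := cdf_sub_le h
    have h2 : stdGaussCDF x ≤ stdGaussCDF y := cdf_strictMono.monotone h
    rw [abs_of_nonpos (by linarith), abs_of_nonpos (by linarith)]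
    linarith
  · have h1 := cdf_sub_le h
    have h2 : stdGaussCDF y ≤ stdGaussCDF x := cdf_strictMono.monotone h
    rw [abs_of_nonneg (by linarith), abs_of_nonneg (by linarith)]
    linarith

lemma cdf_tendsto_atTop : Tendsto stdGaussCDF atTop (𝓝 1) :=
  (tendsto_cdf_atTop γ).congr fun x => (cdf_eq_real γ x)

lemma cdf_tendsto_atBot : Tendsto stdGaussCDF atBot (𝓝 0) :=
  (tendsto_cdf_atBot γ).congr fun x => (cdf_eq_real γ x)

lemma surv_mem (x : ℝ) : stdGaussSurv x ∈ Ioo (0:ℝ) 1 := by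
  constructor
  · simp only [stdGaussSurv]; linarith [cdf_lt_one x]
  · simp only [stdGaussSurv]; linarith [cdf_pos x]

lemma surv_strictAnti : StrictAnti stdGaussSurv := by
  intro a b hab
  simp only [stdGaussSurv]
  linarith [cdf_strictMono hab]

lemma surv_continuous : Continuous stdGaussSurv :=
  continuous_const.sub cdf_continuous

lemma surv_surj {u : ℝ} (hu : u ∈ Ioo (0:ℝ) 1) : ∃ x, stdGaussSurv x = u := by
  obtain ⟨a, ha⟩ : ∃ a, stdGaussCDF a < 1 - u :=
    (cdf_tendsto_atBot.eventually_lt_const (by linarith [hu.2] : (0:ℝ) < 1 - u)).exists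
  obtain ⟨b, hb⟩ : ∃ b, 1 - u < stdGaussCDF b :=
    (cdf_tendsto_atTop.eventually_const_lt (by linarith [hu.1] : (1:ℝ) - u < 1)).exists
  have hmono := cdf_strictMono.monotone
  have hsub := intermediate_value_Icc (min_le_max (a := a) (b := b))
    cdf_continuous.continuousOn
  have hmem : 1 - u ∈ Icc (stdGaussCDF (min a b)) (stdGaussCDF (max a b)) :=
    ⟨le_of_lt (lt_of_le_of_lt (hmono (min_le_left a b)) ha),
     le_of_lt (lt_of_lt_of_le hb (hmono (le_max_right a b)))⟩
  obtain ⟨x, _, hx⟩ := hsub hmem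
  exact ⟨x, by simp only [stdGaussSurv, hx]; ring⟩

lemma surv_inj : Function.Injective stdGaussSurv := surv_strictAnti.injective

lemma surv_zval {u : ℝ} (hu : u ∈ Ioo (0:ℝ) 1) : stdGaussSurv (zval u) = u :=
  Function.invFun_eq (surv_surj hu)

lemma zval_surv (x : ℝ) : zval (stdGaussSurv x) = x :=
  Function.leftInverse_invFun surv_inj x

lemma zval_le_iff {u x : ℝ} (hu : u ∈ Ioo (0:ℝ) 1) :
    zval u ≤ x ↔ stdGaussSurv x ≤ u := by
  conv_rhs => rw [← surv_zval hu]
  exact (surv_strictAnti.le_iff_ge).symm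

lemma inter_preimage_zval (B : Set ℝ) :
    Ioo (0:ℝ) 1 ∩ zval ⁻¹' B = stdGaussSurv '' B := by
  ext u
  constructor
  · rintro ⟨h1, h2⟩
    exact ⟨zval u, h2, surv_zval h1⟩
  · rintro ⟨x, hx, rfl⟩
    exact ⟨surv_mem x, by rw [mem_preimage, zval_surv]; exact hx⟩

lemma measurable_cdf : Measurable stdGaussCDF := cdf_strictMono.monotone.measurable

lemma measurable_surv : Measurable stdGaussSurv := measurable_const.sub measurable_cdf

lemma surv_embedding : MeasurableEmbedding stdGaussSurv :=
  surv_continuous.measurableEmbedding surv_inj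

lemma gauss_singleton (x : ℝ) : γ {x} = 0 := by
  rw [gaussianReal_apply 0 one_ne_zero]
  exact setLIntegral_measure_zero _ _ (by simp)

lemma gauss_Ici (x : ℝ) : γ (Ici x) = ENNReal.ofReal (stdGaussSurv x) := by
  have h0 : γ (Iio x) = γ (Iic x) := by
    have : γ (Iic x) = γ (Iio x) + γ {x} := by
      rw [← measure_union (by simp [disjoint_singleton_right]) (measurableSet_singleton x),
        Iio_union_right]
    rw [this, gauss_singleton, add_zero]
  have h1 : γ (Ici x) = 1 - γ (Iio x) := by
    rw [← compl_Iio, measure_compl measurableSet_Iio (measure_ne_top _ _), measure_univ]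
  rw [h1, h0, ← ofReal_cdf, stdGaussSurv, ← ENNReal.ofReal_one,
    ← ENNReal.ofReal_sub _ (le_of_lt (cdf_pos x))]

instance : IsProbabilityMeasure unif01 :=
  ⟨by simp [unif01, Real.volume_Ioo]⟩

lemma map_surv_gauss : (gaussianReal 0 1).map stdGaussSurv = unif01 := by
  haveI := Measure.isProbabilityMeasure_map (μ := γ) measurable_surv.aemeasurable
  refine Measure.ext_of_Iic ((gaussianReal 0 1).map stdGaussSurv) unif01 (fun u => ?_)
  rw [Measure.map_apply measurable_surv measurableSet_Iic, unif01,
    Measure.restrict_apply measurableSet_Iic]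
  rcases le_or_gt u 0 with hu | hu
  · have h1 : stdGaussSurv ⁻¹' Iic u = ∅ := by
      ext x
      simp only [mem_preimage, mem_Iic, mem_empty_iff_false, iff_false, not_le]
      exact lt_of_le_of_lt hu (surv_mem x).1
    have h2 : Iic u ∩ Ioo (0:ℝ) 1 = ∅ := by
      ext x
      simp only [mem_inter_iff, mem_Iic, mem_Ioo, mem_empty_iff_false, iff_false, not_and]
      intro hx h0
      linarith
    rw [h1, h2, measure_empty, measure_empty]
  rcases lt_or_ge u 1 with hu1 | hu1
  · have huI : u ∈ Ioo (0:ℝ) 1 := ⟨hu, hu1⟩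
    have h1 : stdGaussSurv ⁻¹' Iic u = Ici (zval u) := by
      ext x
      simp only [mem_preimage, mem_Iic, mem_Ici]
      exact (zval_le_iff huI).symm
    have h2 : Iic u ∩ Ioo (0:ℝ) 1 = Ioc 0 u := by
      ext x
      simp only [mem_inter_iff, mem_Iic, mem_Ioo, mem_Ioc]
      constructor
      · rintro ⟨h1, h2, _⟩; exact ⟨h2, h1⟩
      · rintro ⟨h1, h2⟩; exact ⟨h2, h1, lt_of_le_of_lt h2 hu1⟩
    rw [h1, h2, gauss_Ici, surv_zval huI, Real.volume_Ioc, sub_zero]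
  · have h1 : stdGaussSurv ⁻¹' Iic u = univ := by
      ext x
      simp only [mem_preimage, mem_Iic, mem_univ, iff_true]
      linarith [(surv_mem x).2]
    have h2 : Iic u ∩ Ioo (0:ℝ) 1 = Ioo 0 1 := by
      refine inter_eq_self_of_subset_right (fun x hx => ?_)
      exact le_of_lt (lt_of_lt_of_le hx.2 hu1)
    rw [h1, h2, measure_univ, Real.volume_Ioo, sub_zero, ENNReal.ofReal_one]

end StdGaussAux

namespace StdGaussAux

/-- The rotation on `ℝ × ℝ` with matrix `[[w₁, w₂], [-w₂, w₁]]`. -/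
def rot (w₁ w₂ : ℝ) : ℝ × ℝ → ℝ × ℝ :=
  fun p => (w₁ * p.1 + w₂ * p.2, -w₂ * p.1 + w₁ * p.2)

lemma measurable_rot (w₁ w₂ : ℝ) : Measurable (rot w₁ w₂) := by
  unfold rot; fun_prop

lemma rot_measurePreserving {w₁ w₂ : ℝ} (hw : w₁ ^ 2 + w₂ ^ 2 = 1) :
    MeasurePreserving (rot w₁ w₂) (volume : Measure (ℝ × ℝ)) volume := by
  classical
  set M : Matrix (Fin 2) (Fin 2) ℝ := Matrix.of ![![w₁, w₂], ![-w₂, w₁]] with hMdef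
  have hdet : M.det = 1 := by
    rw [hMdef]
    rw [Matrix.det_fin_two_of]
    nlinarith [hw]
  set L : (Fin 2 → ℝ) →ₗ[ℝ] (Fin 2 → ℝ) := Matrix.toLin' M with hLdef
  have hLdet : LinearMap.det L = 1 := by rw [hLdef, LinearMap.det_toLin', hdet]
  have hLmeas : Measurable L := L.continuous_of_finiteDimensional.measurable
  have hmapL : Measure.map L volume = volume := by
    rw [Real.map_linearMap_volume_pi_eq_smul_volume_pi (by rw [hLdet]; norm_num), hLdet]
    norm_num
  have hL : MeasurePreserving L volume volume := ⟨hLmeas, hmapL⟩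
  have he := volume_preserving_finTwoArrow ℝ
  have hcomp := he.comp (hL.comp he.symm)
  have heq : rot w₁ w₂ =
      (MeasurableEquiv.finTwoArrow : (Fin 2 → ℝ) ≃ᵐ ℝ × ℝ) ∘ L ∘
        (MeasurableEquiv.finTwoArrow : (Fin 2 → ℝ) ≃ᵐ ℝ × ℝ).symm := by
    funext p
    simp [rot, hLdef, hMdef, MeasurableEquiv.finTwoArrow, Matrix.toLin'_apply,
      Matrix.mulVec, dotProduct, Fin.sum_univ_two]
  rw [heq]
  exact hcomp

lemma prod_gauss_withDensity :
    (gaussianReal 0 1).prod (gaussianReal 0 1) =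
      (volume : Measure (ℝ × ℝ)).withDensity
        (fun p => gaussianPDF 0 1 p.1 * gaussianPDF 0 1 p.2) := by
  have hpdfm : Measurable (gaussianPDF 0 1) := (measurable_gaussianPDFReal 0 1).ennreal_ofReal
  refine Measure.prod_eq (fun s t hs ht => ?_)
  rw [withDensity_apply _ (hs.prod ht), Measure.volume_eq_prod, ← Measure.prod_restrict,
    lintegral_prod_mul hpdfm.aemeasurable hpdfm.aemeasurable,
    gaussianReal_apply 0 one_ne_zero s, gaussianReal_apply 0 one_ne_zero t]

lemma pdfReal_explicit (a : ℝ) :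
    gaussianPDFReal 0 1 a = (Real.sqrt (2 * Real.pi))⁻¹ * Real.exp (-(a ^ 2) / 2) := by
  rw [gaussianPDFReal]
  push_cast
  norm_num

lemma pdf_rot {w₁ w₂ : ℝ} (hw : w₁ ^ 2 + w₂ ^ 2 = 1) (p : ℝ × ℝ) :
    gaussianPDF 0 1 (rot w₁ w₂ p).1 * gaussianPDF 0 1 (rot w₁ w₂ p).2
      = gaussianPDF 0 1 p.1 * gaussianPDF 0 1 p.2 := by
  have key : ∀ a b : ℝ, gaussianPDFReal 0 1 a * gaussianPDFReal 0 1 b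
      = (Real.sqrt (2 * Real.pi))⁻¹ ^ 2 * Real.exp (-(a ^ 2 + b ^ 2) / 2) := by
    intro a b
    rw [pdfReal_explicit, pdfReal_explicit]
    rw [show ((Real.sqrt (2 * Real.pi))⁻¹ * Real.exp (-(a ^ 2) / 2)) *
        ((Real.sqrt (2 * Real.pi))⁻¹ * Real.exp (-(b ^ 2) / 2))
        = (Real.sqrt (2 * Real.pi))⁻¹ ^ 2 * (Real.exp (-(a ^ 2) / 2) * Real.exp (-(b ^ 2) / 2))
        by ring, ← Real.exp_add]
    congr 1
    ring
  simp only [gaussianPDF]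
  rw [← ENNReal.ofReal_mul (gaussianPDFReal_nonneg 0 1 _),
    ← ENNReal.ofReal_mul (gaussianPDFReal_nonneg 0 1 _)]
  congr 1
  rw [key, key]
  congr 2
  simp only [rot]
  linear_combination (-(p.1 ^ 2 + p.2 ^ 2) / 2) * hw

lemma map_rot_prod_gauss {w₁ w₂ : ℝ} (hw : w₁ ^ 2 + w₂ ^ 2 = 1) :
    Measure.map (rot w₁ w₂) ((gaussianReal 0 1).prod (gaussianReal 0 1))
      = (gaussianReal 0 1).prod (gaussianReal 0 1) := by
  set F : ℝ × ℝ → ℝ≥0∞ := fun p => gaussianPDF 0 1 p.1 * gaussianPDF 0 1 p.2 with hF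
  have hpdfm : Measurable (gaussianPDF 0 1) := (measurable_gaussianPDFReal 0 1).ennreal_ofReal
  have hFmeas : Measurable F := (hpdfm.comp measurable_fst).mul (hpdfm.comp measurable_snd)
  have hFrot : ∀ p, F (rot w₁ w₂ p) = F p := fun p => pdf_rot hw p
  rw [prod_gauss_withDensity]
  refine Measure.ext (fun s hs => ?_)
  rw [Measure.map_apply (measurable_rot w₁ w₂) hs,
    withDensity_apply _ ((measurable_rot w₁ w₂) hs), withDensity_apply _ hs]
  calc ∫⁻ p in rot w₁ w₂ ⁻¹' s, F p
      = ∫⁻ p in rot w₁ w₂ ⁻¹' s, F (rot w₁ w₂ p) := by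
        exact lintegral_congr fun p => (hFrot p).symm
    _ = ∫⁻ q in s, F q ∂(Measure.map (rot w₁ w₂) volume) :=
        (setLIntegral_map hs hFmeas (measurable_rot w₁ w₂)).symm
    _ = ∫⁻ q in s, F q := by rw [(rot_measurePreserving hw).map_eq]

lemma map_sum_gauss {w₁ w₂ : ℝ} (hw : w₁ ^ 2 + w₂ ^ 2 = 1) :
    Measure.map (fun p : ℝ × ℝ => w₁ * p.1 + w₂ * p.2)
      ((gaussianReal 0 1).prod (gaussianReal 0 1)) = gaussianReal 0 1 := by
  have h1 : (fun p : ℝ × ℝ => w₁ * p.1 + w₂ * p.2) = Prod.fst ∘ rot w₁ w₂ := rfl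
  rw [h1, ← Measure.map_map measurable_fst (measurable_rot w₁ w₂), map_rot_prod_gauss hw,
    Measure.map_fst_prod]
  simp

end StdGaussAux

theorem stmt1 {Ω : Type*} [MeasurableSpace Ω] (μ : Measure Ω) [IsProbabilityMeasure μ]
    (P₁ P₂ : Ω → ℝ) (hm₁ : Measurable P₁) (hm₂ : Measurable P₂)
    (hval₁ : ∀ ω, P₁ ω ∈ Set.Ioo (0 : ℝ) 1) (hval₂ : ∀ ω, P₂ ω ∈ Set.Ioo (0 : ℝ) 1)
    (hu₁ : μ.map P₁ = unif01) (hu₂ : μ.map P₂ = unif01)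
    (hind : IndepFun P₁ P₂ μ)
    (w₁ w₂ : ℝ) (hw₁ : 0 < w₁) (hw₂ : 0 < w₂) (hw : w₁ ^ 2 + w₂ ^ 2 = 1) :
    μ.map (fun ω => stdGaussSurv (w₁ * zval (P₁ ω) + w₂ * zval (P₂ ω))) = unif01 := by
  -- measurability of `zval ∘ Pᵢ`
  have hpre : ∀ (P : Ω → ℝ), (∀ ω, P ω ∈ Set.Ioo (0 : ℝ) 1) → ∀ x : ℝ,
      (fun ω => zval (P ω)) ⁻¹' Iic x = P ⁻¹' Ici (stdGaussSurv x) := by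
    intro P hval x
    ext ω
    simp only [mem_preimage, mem_Iic, mem_Ici]
    exact StdGaussAux.zval_le_iff (hval ω)
  have hZm : ∀ (P : Ω → ℝ), Measurable P → (∀ ω, P ω ∈ Set.Ioo (0 : ℝ) 1) →
      Measurable (fun ω => zval (P ω)) := by
    intro P hm hval
    refine measurable_of_Iic (fun x => ?_)
    rw [hpre P hval x]
    exact hm measurableSet_Ici
  have hZm₁ := hZm P₁ hm₁ hval₁
  have hZm₂ := hZm P₂ hm₂ hval₂
  -- law of `zval ∘ Pᵢ` is standard gaussian
  have hZlaw : ∀ (P : Ω → ℝ) (hm : Measurable P) (hval : ∀ ω, P ω ∈ Set.Ioo (0 : ℝ) 1),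
      μ.map P = unif01 → μ.map (fun ω => zval (P ω)) = gaussianReal 0 1 := by
    intro P hm hval hu
    haveI : IsProbabilityMeasure (μ.map (fun ω => zval (P ω))) :=
      Measure.isProbabilityMeasure_map (hZm P hm hval).aemeasurable
    refine Measure.ext_of_Iic _ _ (fun x => ?_)
    rw [Measure.map_apply (hZm P hm hval) measurableSet_Iic, hpre P hval x,
      ← Measure.map_apply hm measurableSet_Ici, hu, unif01,
      Measure.restrict_apply measurableSet_Ici]
    have hsx := StdGaussAux.surv_mem x
    have h2 : Ici (stdGaussSurv x) ∩ Ioo (0:ℝ) 1 = Ico (stdGaussSurv x) 1 := by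
      ext t
      simp only [mem_inter_iff, mem_Ici, mem_Ioo, mem_Ico]
      constructor
      · rintro ⟨h1, _, h3⟩; exact ⟨h1, h3⟩
      · rintro ⟨h1, h2⟩; exact ⟨h1, lt_of_lt_of_le hsx.1 h1, h2⟩
    rw [h2, Real.volume_Ico, ← StdGaussAux.ofReal_cdf]
    congr 1
    simp only [stdGaussSurv]
    ring
  -- independence of `zval ∘ P₁`, `zval ∘ P₂`
  have hZind : IndepFun (fun ω => zval (P₁ ω)) (fun ω => zval (P₂ ω)) μ := by
    rw [indepFun_iff_measure_inter_preimage_eq_mul]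
    intro S T hS hT
    have e : ∀ (P : Ω → ℝ), (∀ ω, P ω ∈ Set.Ioo (0 : ℝ) 1) → ∀ B : Set ℝ,
        (fun ω => zval (P ω)) ⁻¹' B = P ⁻¹' (stdGaussSurv '' B) := by
      intro P hval B
      ext ω
      rw [mem_preimage, mem_preimage, ← StdGaussAux.inter_preimage_zval, mem_inter_iff]
      exact (and_iff_right (hval ω)).symm
    rw [e P₁ hval₁ S, e P₂ hval₂ T]
    exact hind.measure_inter_preimage_eq_mul _ _
      (StdGaussAux.surv_embedding.measurableSet_image.mpr hS)
      (StdGaussAux.surv_embedding.measurableSet_image.mpr hT)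
  -- joint law
  have hjoint : μ.map (fun ω => (zval (P₁ ω), zval (P₂ ω)))
      = (gaussianReal 0 1).prod (gaussianReal 0 1) := by
    rw [(indepFun_iff_map_prod_eq_prod_map_map hZm₁.aemeasurable hZm₂.aemeasurable).mp hZind,
      hZlaw P₁ hm₁ hval₁ hu₁, hZlaw P₂ hm₂ hval₂ hu₂]
  -- assemble
  have hsum_m : Measurable (fun p : ℝ × ℝ => w₁ * p.1 + w₂ * p.2) := by fun_prop
  have hfin : (fun ω => stdGaussSurv (w₁ * zval (P₁ ω) + w₂ * zval (P₂ ω)))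
      = (stdGaussSurv ∘ (fun p : ℝ × ℝ => w₁ * p.1 + w₂ * p.2)) ∘
        (fun ω => (zval (P₁ ω), zval (P₂ ω))) := rfl
  rw [hfin, ← Measure.map_map (StdGaussAux.measurable_surv.comp hsum_m)
    (hZm₁.prodMk hZm₂), hjoint,
    ← Measure.map_map StdGaussAux.measurable_surv hsum_m,
    StdGaussAux.map_sum_gauss hw, StdGaussAux.map_surv_gauss]
end

section
/- (Formula (5.1) for the true confidence coefficient.) Let (Ω, μ) be a probability space, let W : Ω → 𝒲 be a measurable map into a measurable space 𝒲, and let Y : Ω → ℝ be a random variable. Let t, t_o : 𝒲 → ℝ be measurable with t(W) > 0 and t_o(W) > 0 almost surely, fix δ ∈ ℝ, let p₁ : 𝒲 → (0,1) be measurable, and suppose the conditional distribution of Y given W under μ is the Gaussian measure with mean δ·t_o(W) and variance t_o(W). Define the combined p-value p(W, Y; δ) = Φ̄( (√(t(W))·z(p₁(W)) + Y − δ·t_o(W)) / √(t(W) + t_o(W)) ). Then for every γ ∈ (0,1), μ{ p(W, Y; δ) < γ } = ∫ Φ( ( √(t(w))·z(p₁(w)) − √(t(w) + t_o(w))·z(γ)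 ) / √(t_o(w)) ) d(μ ∘ W⁻¹)(w). -/
open MeasureTheory ProbabilityTheory Set

lemma stdGaussCDF_eq_cdf : stdGaussCDF = cdf (gaussianReal 0 1) := by
  funext x; rw [cdf_eq_real]; rfl

lemma stdGaussCDF_eq_integral (x : ℝ) :
    stdGaussCDF x = ∫ y in Iic x, gaussianPDFReal 0 1 y := by
  rw [stdGaussCDF, gaussianReal_apply_eq_integral 0 one_ne_zero,
    ENNReal.toReal_ofReal]
  exact integral_nonneg fun y => gaussianPDFReal_nonneg 0 1 y

lemma continuous_stdGaussCDF : Continuous stdGaussCDF := by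
  have hInt : Integrable (gaussianPDFReal 0 1) := integrable_gaussianPDFReal 0 1
  have : stdGaussCDF = fun b => stdGaussCDF 0 + ∫ y in (0:ℝ)..b, gaussianPDFReal 0 1 y := by
    funext b
    rw [stdGaussCDF_eq_integral, stdGaussCDF_eq_integral,
      ← intervalIntegral.integral_Iic_sub_Iic hInt.integrableOn hInt.integrableOn]
    ring
  rw [this]
  exact continuous_const.add (hInt.continuous_primitive 0)

lemma stdGaussSurv_eq_Ioi (x : ℝ) :
    stdGaussSurv x = ((gaussianReal 0 1) (Set.Ioi x)).toReal := by
  have h : (gaussianReal 0 1) (Iic x) + (gaussianReal 0 1) (Ioi x) = 1 := by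
    rw [← measure_union (Iic_disjoint_Ioi le_rfl) measurableSet_Ioi, Iic_union_Ioi,
      measure_univ]
  have h2 : ((gaussianReal 0 1) (Iic x)).toReal + ((gaussianReal 0 1) (Ioi x)).toReal = 1 := by
    rw [← ENNReal.toReal_add (measure_ne_top _ _) (measure_ne_top _ _), h, ENNReal.toReal_one]
  rw [stdGaussSurv, stdGaussCDF]; linarith

lemma strictMono_stdGaussCDF : StrictMono stdGaussCDF := by
  intro x y hxy
  have hsub : (gaussianReal 0 1) (Iic x) + (gaussianReal 0 1) (Ioc x y)
      = (gaussianReal 0 1) (Iic y) := by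
    rw [← measure_union (Iic_disjoint_Ioc le_rfl) measurableSet_Ioc, Iic_union_Ioc_eq_Iic hxy.le]
  have hpos : 0 < (gaussianReal 0 1) (Ioc x y) := by
    rw [pos_iff_ne_zero]
    intro h
    have hv : volume (Ioc x y) = 0 :=
      gaussianReal_absolutelyContinuous' 0 one_ne_zero h
    rw [Real.volume_Ioc] at hv
    simp only [ENNReal.ofReal_eq_zero] at hv
    linarith
  have := ENNReal.toReal_add (measure_ne_top (gaussianReal 0 1) (Iic x))
    (measure_ne_top (gaussianReal 0 1) (Ioc x y))
  rw [hsub] at this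
  have hposR : 0 < ((gaussianReal 0 1) (Ioc x y)).toReal :=
    ENNReal.toReal_pos hpos.ne' (measure_ne_top _ _)
  rw [stdGaussCDF, stdGaussCDF, this]; linarith

lemma strictAnti_stdGaussSurv : StrictAnti stdGaussSurv := by
  intro x y hxy
  have := strictMono_stdGaussCDF hxy
  simp only [stdGaussSurv]; linarith

lemma tendsto_surv_atTop : Filter.Tendsto stdGaussSurv Filter.atTop (nhds 0) := by
  have h : Filter.Tendsto stdGaussCDF Filter.atTop (nhds 1) := by
    rw [stdGaussCDF_eq_cdf]; exact tendsto_cdf_atTop _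
  have := Filter.Tendsto.const_sub (1:ℝ) h
  have e : stdGaussSurv = fun x => 1 - stdGaussCDF x := rfl
  rw [e]; simpa using this

lemma tendsto_surv_atBot : Filter.Tendsto stdGaussSurv Filter.atBot (nhds 1) := by
  have h : Filter.Tendsto stdGaussCDF Filter.atBot (nhds 0) := by
    rw [stdGaussCDF_eq_cdf]; exact tendsto_cdf_atBot _
  have := Filter.Tendsto.const_sub (1:ℝ) h
  have e : stdGaussSurv = fun x => 1 - stdGaussCDF x := rfl
  rw [e]; simpa using this

lemma exists_surv_eq {γ : ℝ} (hγ : γ ∈ Set.Ioo (0:ℝ) 1) : ∃ x, stdGaussSurv x = γ := by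
  obtain ⟨b, hb⟩ := (tendsto_surv_atTop.eventually_lt_const hγ.1).exists
  obtain ⟨a, ha⟩ := (tendsto_surv_atBot.eventually_const_lt hγ.2).exists
  have hcont : ContinuousOn stdGaussSurv (uIcc a b) :=
    (continuous_const.sub continuous_stdGaussCDF).continuousOn
  have hmem : γ ∈ uIcc (stdGaussSurv a) (stdGaussSurv b) := by
    rw [Set.mem_uIcc]; right; exact ⟨hb.le, ha.le⟩
  obtain ⟨x, _, hx⟩ := intermediate_value_uIcc hcont hmem
  exact ⟨x, hx⟩

lemma surv_zval {γ : ℝ} (hγ : γ ∈ Set.Ioo (0:ℝ) 1) : stdGaussSurv (zval γ) = γ :=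
  Function.invFun_eq (exists_surv_eq hγ)

lemma surv_lt_iff {γ : ℝ} (hγ : γ ∈ Set.Ioo (0:ℝ) 1) (x : ℝ) :
    stdGaussSurv x < γ ↔ zval γ < x := by
  conv_lhs => rw [← surv_zval hγ]
  exact strictAnti_stdGaussSurv.lt_iff_gt

lemma measurable_stdGaussSurv : Measurable stdGaussSurv :=
  measurable_const.sub (strictMono_stdGaussCDF.monotone.measurable)

lemma measurable_stdGaussCDF : Measurable stdGaussCDF :=
  strictMono_stdGaussCDF.monotone.measurable

lemma measurable_zval_comp {𝒲 : Type*} [MeasurableSpace 𝒲] {p₁ : 𝒲 → ℝ}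
    (hp₁ : Measurable p₁) (hp₁val : ∀ w, p₁ w ∈ Set.Ioo (0 : ℝ) 1) :
    Measurable fun w => zval (p₁ w) := by
  apply measurable_of_Iio
  intro x
  have : (fun w => zval (p₁ w)) ⁻¹' Iio x = p₁ ⁻¹' Ioi (stdGaussSurv x) := by
    ext w
    simp only [Set.mem_preimage, Set.mem_Iio, Set.mem_Ioi]
    exact (surv_lt_iff (hp₁val w) x).symm
  rw [this]
  exact hp₁ measurableSet_Ioi

lemma gaussianReal_singleton (x : ℝ) : (gaussianReal 0 1) {x} = 0 :=
  gaussianReal_absolutelyContinuous 0 one_ne_zero (Real.volume_singleton)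

lemma gauss_Ici_eq_Ioi (x : ℝ) : (gaussianReal 0 1) (Ici x) = (gaussianReal 0 1) (Ioi x) := by
  refine le_antisymm ?_ (measure_mono Ioi_subset_Ici_self)
  calc (gaussianReal 0 1) (Ici x) ≤ (gaussianReal 0 1) ({x} ∪ Ioi x) := by
        apply measure_mono; intro y hy
        rcases eq_or_lt_of_le (mem_Ici.mp hy) with h | h
        · exact Or.inl h.symm
        · exact Or.inr h
    _ ≤ (gaussianReal 0 1) {x} + (gaussianReal 0 1) (Ioi x) := measure_union_le _ _
    _ = (gaussianReal 0 1) (Ioi x) := by rw [gaussianReal_singleton, zero_add]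

lemma stdGaussCDF_neg (x : ℝ) : stdGaussCDF (-x) = stdGaussSurv x := by
  have hmap : (gaussianReal 0 1).map (fun y => (-1 : ℝ) * y) = gaussianReal 0 1 := by
    have hv : (⟨(-1:ℝ)^2, sq_nonneg _⟩ : NNReal) * 1 = 1 := by
      ext; norm_num
    rw [gaussianReal_map_const_mul, mul_zero]; congr 1
  have : (gaussianReal 0 1) (Iic (-x)) = (gaussianReal 0 1) (Ici x) := by
    conv_lhs => rw [← hmap]
    rw [Measure.map_apply (by fun_prop) measurableSet_Iic]
    congr 1
    ext y
    simp only [Set.mem_preimage, Set.mem_Iic, Set.mem_Ici]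
    constructor <;> intro h <;> nlinarith
  rw [stdGaussCDF, this, gauss_Ici_eq_Ioi, ← stdGaussSurv_eq_Ioi]

lemma gauss_Ioi (m : ℝ) {v : NNReal} (hv : v ≠ 0) (c : ℝ) :
    gaussianReal m v (Ioi c) = ENNReal.ofReal (stdGaussSurv ((c - m) / Real.sqrt v)) := by
  have hvpos : (0:ℝ) < v := NNReal.coe_pos.mpr (pos_iff_ne_zero.mpr hv)
  have hs : (0:ℝ) < Real.sqrt v := Real.sqrt_pos.mpr hvpos
  have h1 : (gaussianReal 0 1).map (fun x => Real.sqrt v * x) = gaussianReal 0 v := by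
    have hvv : (⟨(Real.sqrt v)^2, sq_nonneg _⟩ : NNReal) * 1 = v := by
      ext; simp [Real.sq_sqrt v.coe_nonneg]
    rw [gaussianReal_map_const_mul, mul_zero]; congr 1
  have h2 : (gaussianReal 0 v).map (· + m) = gaussianReal m v := by
    rw [gaussianReal_map_add_const, zero_add]
  rw [← h2, ← h1, Measure.map_map (measurable_add_const m) (measurable_const_mul _),
    Measure.map_apply (by fun_prop) measurableSet_Ioi]
  have hset : ((· + m) ∘ fun x => Real.sqrt v * x) ⁻¹' Ioi c
      = Ioi ((c - m) / Real.sqrt v) := by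
    ext x
    simp only [Function.comp, mem_preimage, mem_Ioi]
    rw [div_lt_iff₀ hs]
    constructor <;> intro h <;> nlinarith
  rw [hset, ← ENNReal.ofReal_toReal (measure_ne_top (gaussianReal 0 1) _), ← stdGaussSurv_eq_Ioi]

theorem stmt14 {Ω 𝒲 : Type*} [MeasurableSpace Ω] [MeasurableSpace 𝒲]
    (μ : Measure Ω) [IsProbabilityMeasure μ]
    (W : Ω → 𝒲) (hW : Measurable W)
    (Y : Ω → ℝ) (hY : Measurable Y)
    (t t_o : 𝒲 → ℝ) (ht : Measurable t) (ht_o : Measurable t_o)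
    (htpos : ∀ᵐ ω ∂μ, 0 < t (W ω)) (ht_opos : ∀ᵐ ω ∂μ, 0 < t_o (W ω))
    (δ : ℝ)
    (p₁ : 𝒲 → ℝ) (hp₁ : Measurable p₁) (hp₁val : ∀ w, p₁ w ∈ Set.Ioo (0 : ℝ) 1)
    (hcond : ∀ᵐ w ∂(μ.map W),
      condDistrib Y W μ w = gaussianReal (δ * t_o w) (Real.toNNReal (t_o w))) :
    ∀ γ ∈ Set.Ioo (0 : ℝ) 1,
      (μ {ω | stdGaussSurv
          ((Real.sqrt (t (W ω)) * zval (p₁ (W ω)) + Y ω - δ * t_o (W ω)) /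
            Real.sqrt (t (W ω) + t_o (W ω))) < γ}).toReal =
        ∫ w, stdGaussCDF
          ((Real.sqrt (t w) * zval (p₁ w) - Real.sqrt (t w + t_o w) * zval γ) /
            Real.sqrt (t_o w)) ∂(μ.map W) := by
  intro γ hγ
  haveI : IsProbabilityMeasure (μ.map W) := Measure.isProbabilityMeasure_map hW.aemeasurable
  haveI : IsProbabilityMeasure (μ.map fun ω => (W ω, Y ω)) :=
    Measure.isProbabilityMeasure_map (hW.prodMk hY).aemeasurable
  have hz : Measurable fun w => zval (p₁ w) := measurable_zval_comp hp₁ hp₁val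
  set G : 𝒲 → ℝ := fun w =>
    (Real.sqrt (t w) * zval (p₁ w) - Real.sqrt (t w + t_o w) * zval γ) / Real.sqrt (t_o w)
    with hGdef
  have hG : Measurable G := by
    apply Measurable.div
    · exact ((Real.continuous_sqrt.measurable.comp ht).mul hz).sub
        ((Real.continuous_sqrt.measurable.comp (ht.add ht_o)).mul measurable_const)
    · exact Real.continuous_sqrt.measurable.comp ht_o
  have hf : Measurable fun p : 𝒲 × ℝ =>
      (Real.sqrt (t p.1) * zval (p₁ p.1) + p.2 - δ * t_o p.1) /
        Real.sqrt (t p.1 + t_o p.1) := by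
    apply Measurable.div
    · exact (((Real.continuous_sqrt.measurable.comp (ht.comp measurable_fst)).mul
        (hz.comp measurable_fst)).add measurable_snd).sub
        ((measurable_const.mul (ht_o.comp measurable_fst)))
    · exact Real.continuous_sqrt.measurable.comp ((ht.comp measurable_fst).add
        (ht_o.comp measurable_fst))
  set S : Set (𝒲 × ℝ) := {p : 𝒲 × ℝ | stdGaussSurv
      ((Real.sqrt (t p.1) * zval (p₁ p.1) + p.2 - δ * t_o p.1) /
        Real.sqrt (t p.1 + t_o p.1)) < γ} with hSdef
  have hS : MeasurableSet S :=
    measurableSet_lt (measurable_stdGaussSurv.comp hf) measurable_const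
  have hμ : μ {ω | stdGaussSurv
      ((Real.sqrt (t (W ω)) * zval (p₁ (W ω)) + Y ω - δ * t_o (W ω)) /
        Real.sqrt (t (W ω) + t_o (W ω))) < γ}
      = (μ.map fun ω => (W ω, Y ω)) S := (Measure.map_apply (hW.prodMk hY) hS).symm
  have hcomp : (μ.map fun ω => (W ω, Y ω)) = (μ.map W) ⊗ₘ condDistrib Y W μ := by
    have h := Measure.disintegrate (ρ := μ.map fun ω => (W ω, Y ω))
      (ρCond := (μ.map fun ω => (W ω, Y ω)).condKernel)
    rw [Measure.fst_map_prodMk₀ hY.aemeasurable] at h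
    rw [condDistrib]
    exact h.symm
  have htW : ∀ᵐ w ∂(μ.map W), 0 < t w :=
    (ae_map_iff hW.aemeasurable (measurableSet_lt measurable_const ht)).mpr htpos
  have ht_oW : ∀ᵐ w ∂(μ.map W), 0 < t_o w :=
    (ae_map_iff hW.aemeasurable (measurableSet_lt measurable_const ht_o)).mpr ht_opos
  have key : ∀ᵐ w ∂(μ.map W),
      (condDistrib Y W μ) w (Prod.mk w ⁻¹' S) = ENNReal.ofReal (stdGaussCDF (G w)) := by
    filter_upwards [hcond, htW, ht_oW] with w hκ htw htow
    have hsum : 0 < t w + t_o w := by linarith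
    have hs : 0 < Real.sqrt (t w + t_o w) := Real.sqrt_pos.mpr hsum
    have hIoi : Prod.mk w ⁻¹' S = Ioi (δ * t_o w - Real.sqrt (t w) * zval (p₁ w) +
        Real.sqrt (t w + t_o w) * zval γ) := by
      ext y
      simp only [hSdef, mem_preimage, mem_setOf_eq, mem_Ioi]
      rw [surv_lt_iff hγ, lt_div_iff₀ hs]
      constructor <;> intro h <;> nlinarith
    have hv : Real.toNNReal (t_o w) ≠ 0 := by
      rw [Ne, Real.toNNReal_eq_zero]; linarith
    rw [hIoi, hκ, gauss_Ioi _ hv]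
    congr 1
    have hcoe : ((Real.toNNReal (t_o w) : ℝ)) = t_o w := Real.coe_toNNReal _ htow.le
    rw [hcoe]
    have harg : (δ * t_o w - Real.sqrt (t w) * zval (p₁ w) +
        Real.sqrt (t w + t_o w) * zval γ - δ * t_o w) / Real.sqrt (t_o w) = -(G w) := by
      rw [hGdef]; ring
    rw [harg, ← stdGaussCDF_neg, neg_neg]
  have hint := integral_eq_lintegral_of_nonneg_ae (μ := μ.map W)
    (f := fun w => stdGaussCDF (G w))
    (ae_of_all _ fun w => ENNReal.toReal_nonneg)
    (measurable_stdGaussCDF.comp hG).aestronglyMeasurable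
  rw [hμ, hcomp, Measure.compProd_apply hS, lintegral_congr_ae key]
  exact hint.symm
end
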